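/- Let ψ_L ∈ C^∞(𝕋³_L) and define the operator J_L = 4(-Δ_L)^{-1/2} ψ_L (-Δ_L + 1)^{-1} ψ_L (-Δ_L)^{-1/2} on L²(𝕋³_L), where ψ_L acts by multiplication. Then J_L is trace class and satisfies J_L ≤ C_L (-Δ_L + 1)^{-2} for a constant C_L depending on L and Sobolev norms of ψ_L. -/

import Mathlib

open scoped Real BigOperators

abbrev Lat3 := Fin 3 → ℤ

noncomputable def knorm (L : ℝ) (k : Lat3) : ℝ :=
  (2 * Real.pi / L) * Real.sqrt (∑ i, ((k i : ℝ)) ^ 2)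

/-- Fourier representation of `A = 2(-Δ_L+1)^{-1/2} ψ_L (-Δ_L)^{-1/2}` (with `ψ_L` acting by
multiplication, i.e. by convolution with its Fourier coefficients `ψc`), so that
`J_L = A†A` and `⟨f, J_L f⟩ = ‖Af‖²`. -/
noncomputable def Aop (L : ℝ) (ψc : Lat3 → ℂ) (f : Lat3 → ℂ) (m : Lat3) : ℂ :=
  2 * (((knorm L m ^ 2 + 1) ^ (-(1:ℝ)/2) : ℝ) : ℂ) * ((L ^ (-(3:ℝ)/2) : ℝ) : ℂ) *
    ∑' k : Lat3, if k = 0 then 0 else ψc (m - k) * f k * (((knorm L k)⁻¹ : ℝ) : ℂ)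

namespace JLaux

noncomputable def g1 (n : ℤ) : ℝ := (1 + (n:ℝ)^2) ^ (-(2:ℝ)/3)

lemma g1_nonneg (n : ℤ) : 0 ≤ g1 n := Real.rpow_nonneg (by positivity) _

lemma summable_g1 : Summable g1 := by
  have h := Real.summable_abs_int_rpow (b := (4:ℝ)/3) (by norm_num)
  refine Summable.of_nonneg_of_le (fun n => g1_nonneg n)
    ?_ (h.update 0 1)
  intro n
  rcases eq_or_ne n 0 with rfl | hn
  · simp [g1]
  · rw [Function.update_of_ne hn]
    have h0 : (0:ℝ) < (n:ℝ)^2 := by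
      have : (n:ℝ) ≠ 0 := by exact_mod_cast hn
      positivity
    have key : ((1:ℝ) + (n:ℝ)^2) ^ (-(2:ℝ)/3) ≤ ((n:ℝ)^2) ^ (-(2:ℝ)/3) := by
      apply Real.rpow_le_rpow_of_nonpos h0 (by linarith) (by norm_num)
    have e1 : ((n:ℝ)^2) ^ (-(2:ℝ)/3) = |(n:ℝ)| ^ (-(4:ℝ)/3) := by
      rw [← sq_abs, ← Real.rpow_natCast |(n:ℝ)| 2, ← Real.rpow_mul (abs_nonneg _)]
      norm_num
    calc g1 n ≤ ((n:ℝ)^2) ^ (-(2:ℝ)/3) := key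
      _ = |(n:ℝ)| ^ (-(4:ℝ)/3) := e1
      _ = |(n:ℝ)| ^ (-((4:ℝ)/3)) := by norm_num

def lat3Equiv : Lat3 ≃ ℤ × ℤ × ℤ where
  toFun m := (m 0, m 1, m 2)
  invFun p := ![p.1, p.2.1, p.2.2]
  left_inv m := by funext i; fin_cases i <;> rfl
  right_inv p := rfl

lemma summable_prod3 :
    Summable (fun m : Lat3 => g1 (m 0) * (g1 (m 1) * g1 (m 2))) := by
  have h2 : Summable (fun p : ℤ × ℤ => g1 p.1 * g1 p.2) :=
    summable_g1.mul_of_nonneg summable_g1 (fun _ => g1_nonneg _) (fun _ => g1_nonneg _)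
  have h3 : Summable (fun p : ℤ × ℤ × ℤ => g1 p.1 * (g1 p.2.1 * g1 p.2.2)) :=
    summable_g1.mul_of_nonneg h2 (fun _ => g1_nonneg _)
      (fun p => mul_nonneg (g1_nonneg _) (g1_nonneg _))
  exact (lat3Equiv.summable_iff (f := fun p : ℤ × ℤ × ℤ => g1 p.1 * (g1 p.2.1 * g1 p.2.2))).mpr h3

lemma sum3 : Summable (fun m : Lat3 => (((1:ℝ) + ∑ i, ((m i : ℝ))^2)^2)⁻¹) := by
  refine summable_prod3.of_nonneg_of_le (fun m => by positivity) ?_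
  intro m
  set a := ((m 0 : ℝ))^2 with hadef
  set b := ((m 1 : ℝ))^2 with hbdef
  set c := ((m 2 : ℝ))^2 with hcdef
  have hs : ∑ i, ((m i : ℝ))^2 = a + b + c := by
    rw [Fin.sum_univ_three]
  have ha : 0 ≤ a := sq_nonneg _
  have hb : 0 ≤ b := sq_nonneg _
  have hc : 0 ≤ c := sq_nonneg _
  rw [hs]
  have hP : (0:ℝ) < (1+a) * ((1+b) * (1+c)) := by positivity
  have hle : (1+a) * ((1+b) * (1+c)) ≤ (1+(a+b+c))^3 := by
    have h1 : (1+a) ≤ 1+(a+b+c) := by linarith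
    have h2 : (1+b) ≤ 1+(a+b+c) := by linarith
    have h3 : (1+c) ≤ 1+(a+b+c) := by linarith
    have hs1 : (0:ℝ) ≤ 1+(a+b+c) := by linarith
    calc (1+a) * ((1+b) * (1+c)) ≤ (1+(a+b+c)) * ((1+(a+b+c)) * (1+(a+b+c))) := by
          apply mul_le_mul h1 (mul_le_mul h2 h3 (by linarith) hs1) (by positivity) hs1
      _ = (1+(a+b+c))^3 := by ring
  have key : ((1+(a+b+c))^3 : ℝ) ^ (-(2:ℝ)/3) ≤ ((1+a) * ((1+b) * (1+c))) ^ (-(2:ℝ)/3) :=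
    Real.rpow_le_rpow_of_nonpos hP hle (by norm_num)
  have e1 : ((1+(a+b+c))^3 : ℝ) ^ (-(2:ℝ)/3) = ((1 + (a+b+c))^2)⁻¹ := by
    rw [← Real.rpow_natCast (1+(a+b+c)) 3, ← Real.rpow_mul (by positivity)]
    norm_num
  have e2 : ((1+a) * ((1+b) * (1+c))) ^ (-(2:ℝ)/3) = g1 (m 0) * (g1 (m 1) * g1 (m 2)) := by
    rw [Real.mul_rpow (by positivity) (by positivity),
      Real.mul_rpow (by positivity) (by positivity)]
    rfl
  rw [← e1, ← e2]
  exact key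

noncomputable def vv (k : Lat3) : EuclideanSpace ℝ (Fin 3) := WithLp.toLp 2 (fun i => (k i : ℝ))

lemma norm_vv (k : Lat3) : ‖vv k‖ = Real.sqrt (∑ i, ((k i : ℝ))^2) := by
  rw [EuclideanSpace.norm_eq]
  congr 1
  refine Finset.sum_congr rfl fun i _ => ?_
  simp [vv, Real.norm_eq_abs, sq_abs]

lemma knorm_eq (L : ℝ) (k : Lat3) : knorm L k = (2 * Real.pi / L) * ‖vv k‖ := by
  rw [knorm, norm_vv]

lemma knorm_nonneg {L : ℝ} (hL : 0 < L) (k : Lat3) : 0 ≤ knorm L k := by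
  have := Real.pi_pos
  rw [knorm]; positivity

lemma knorm_zero (L : ℝ) : knorm L 0 = 0 := by
  simp [knorm]

lemma knorm_triangle {L : ℝ} (hL : 0 < L) (m k : Lat3) :
    knorm L k ≤ knorm L m + knorm L (m - k) := by
  have hvv : vv k = vv m - vv (m - k) := by
    ext i
    simp [vv, Pi.sub_apply]
  have h1 : ‖vv k‖ ≤ ‖vv m‖ + ‖vv (m - k)‖ := by
    rw [hvv]; exact norm_sub_le _ _
  have hc : (0:ℝ) ≤ 2 * Real.pi / L := by have := Real.pi_pos; positivity
  rw [knorm_eq, knorm_eq, knorm_eq, ← mul_add]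
  exact mul_le_mul_of_nonneg_left h1 hc

lemma knorm_lower {L : ℝ} (hL : 0 < L) {k : Lat3} (hk : k ≠ 0) :
    2 * Real.pi / L ≤ knorm L k := by
  have hπ := Real.pi_pos
  obtain ⟨i, hi⟩ : ∃ i, k i ≠ 0 := by
    by_contra hcon
    push_neg at hcon
    exact hk (funext hcon)
  have h1 : (1:ℝ) ≤ ((k i : ℝ))^2 := by
    have habs : (1:ℤ) ≤ |k i| := Int.one_le_abs hi
    have h1' : (1:ℝ) ≤ |(k i : ℝ)| := by
      have : ((1:ℤ):ℝ) ≤ ((|k i|:ℤ):ℝ) := Int.cast_le.mpr habs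
      simpa [Int.cast_abs] using this
    nlinarith [h1', sq_abs ((k i : ℝ))]
  have h2 : (1:ℝ) ≤ ∑ j, ((k j : ℝ))^2 := by
    refine le_trans h1 (Finset.single_le_sum (f := fun j => ((k j : ℝ))^2) (fun j _ => sq_nonneg _) (Finset.mem_univ i))
  have h3 : (1:ℝ) ≤ Real.sqrt (∑ j, ((k j : ℝ))^2) := by
    rw [show (1:ℝ) = Real.sqrt 1 from (Real.sqrt_one).symm]
    exact Real.sqrt_le_sqrt h2
  calc 2 * Real.pi / L = (2 * Real.pi / L) * 1 := by ring
    _ ≤ knorm L k := by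
        rw [knorm]
        exact mul_le_mul_of_nonneg_left h3 (by positivity)

lemma knorm_pos {L : ℝ} (hL : 0 < L) {k : Lat3} (hk : k ≠ 0) : 0 < knorm L k :=
  lt_of_lt_of_le (by have := Real.pi_pos; positivity) (knorm_lower hL hk)

lemma summable_w {L : ℝ} (hL : 0 < L) :
    Summable (fun m : Lat3 => ((knorm L m ^ 2 + 1)^2)⁻¹) := by
  have hπ := Real.pi_pos
  set c : ℝ := min 1 ((2 * Real.pi / L)^2) with hc
  have hcpos : 0 < c := lt_min one_pos (by positivity)
  refine ((sum3.mul_left ((c^2)⁻¹)).of_nonneg_of_le (fun m => by positivity) ?_)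
  intro m
  set s : ℝ := ∑ i, ((m i : ℝ))^2 with hs
  have hsnn : 0 ≤ s := Finset.sum_nonneg fun i _ => sq_nonneg _
  have hkn : knorm L m ^ 2 = (2 * Real.pi / L)^2 * s := by
    rw [knorm, mul_pow, Real.sq_sqrt hsnn]
  have hlow : c * (1 + s) ≤ knorm L m ^ 2 + 1 := by
    have h1 : c ≤ 1 := min_le_left _ _
    have h2 : c ≤ (2 * Real.pi / L)^2 := min_le_right _ _
    have h3 : c * s ≤ (2 * Real.pi / L)^2 * s := mul_le_mul_of_nonneg_right h2 hsnn
    rw [hkn]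
    nlinarith
  have hsq : (c * (1 + s))^2 ≤ (knorm L m ^ 2 + 1)^2 :=
    pow_le_pow_left₀ (by positivity) hlow 2
  have hinv : ((knorm L m ^ 2 + 1)^2)⁻¹ ≤ ((c * (1 + s))^2)⁻¹ := by
    apply inv_anti₀ (by positivity) hsq
  calc ((knorm L m ^ 2 + 1)^2)⁻¹ ≤ ((c * (1 + s))^2)⁻¹ := hinv
    _ = (c^2)⁻¹ * (((1:ℝ) + s)^2)⁻¹ := by rw [mul_pow, mul_inv]

lemma decay {L : ℝ} (hL : 0 < L) {ψc : Lat3 → ℂ}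
    (hψ : ∀ n : ℕ, ∃ Cn : ℝ, ∀ k : Lat3, ‖ψc k‖ ≤ Cn * (1 + knorm L k ^ 2) ^ (-(n:ℝ)))
    (n : ℕ) :
    ∃ C : ℝ, 0 ≤ C ∧ ∀ k : Lat3, ‖ψc k‖ ≤ C * (((knorm L k ^ 2 + 1))^n)⁻¹ := by
  obtain ⟨C, hC⟩ := hψ n
  have heq : ∀ k : Lat3, (1 + knorm L k ^ 2) ^ (-(n:ℝ)) = ((knorm L k ^ 2 + 1)^n)⁻¹ := by
    intro k
    have hpos : (0:ℝ) ≤ 1 + knorm L k ^ 2 := by positivity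
    rw [Real.rpow_neg hpos, Real.rpow_natCast, add_comm]
  have hC0 : 0 ≤ C := by
    have h0 := hC 0
    rw [knorm_zero] at h0
    have h1 : ((1:ℝ) + 0 ^ 2) ^ (-(n:ℝ)) = 1 := by norm_num
    rw [h1, mul_one] at h0
    linarith [norm_nonneg (ψc 0)]
  exact ⟨C, hC0, fun k => by rw [← heq k]; exact hC k⟩

def shear1 : Lat3 × Lat3 ≃ Lat3 × Lat3 where
  toFun p := (p.1 - p.2, p.1)
  invFun q := (q.2, q.2 - q.1)
  left_inv p := by simp
  right_inv q := by simp

def shear2 : Lat3 × Lat3 ≃ Lat3 × Lat3 where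
  toFun p := (p.1 - p.2, p.2)
  invFun q := (q.1 + q.2, q.2)
  left_inv p := by simp
  right_inv q := by simp

lemma tsum_cs {ι : Type*} (x y : ι → ℝ)
    (hx : Summable fun i => x i ^ 2) (hy : Summable fun i => y i ^ 2)
    (hxy : Summable fun i => x i * y i) (hnn : ∀ i, 0 ≤ x i * y i) :
    (∑' i, x i * y i) ^ 2 ≤ (∑' i, x i ^ 2) * (∑' i, y i ^ 2) := by
  set A := ∑' i, x i ^ 2 with hA
  set B := ∑' i, y i ^ 2 with hB
  have hAnn : 0 ≤ A := tsum_nonneg fun i => sq_nonneg _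
  have hBnn : 0 ≤ B := tsum_nonneg fun i => sq_nonneg _
  have key : ∀ s : Finset ι, ∑ i ∈ s, x i * y i ≤ Real.sqrt (A * B) := by
    intro s
    have h1 : (∑ i ∈ s, x i * y i) ^ 2 ≤ (∑ i ∈ s, x i ^ 2) * (∑ i ∈ s, y i ^ 2) :=
      Finset.sum_mul_sq_le_sq_mul_sq s x y
    have h2 : (∑ i ∈ s, x i ^ 2) ≤ A := Summable.sum_le_tsum s (fun i _ => sq_nonneg _) hx
    have h3 : (∑ i ∈ s, y i ^ 2) ≤ B := Summable.sum_le_tsum s (fun i _ => sq_nonneg _) hy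
    have h4 : (∑ i ∈ s, x i * y i) ^ 2 ≤ A * B :=
      h1.trans (mul_le_mul h2 h3 (Finset.sum_nonneg fun i _ => sq_nonneg _) hAnn)
    have h5 : 0 ≤ ∑ i ∈ s, x i * y i := Finset.sum_nonneg fun i _ => hnn i
    calc ∑ i ∈ s, x i * y i = Real.sqrt ((∑ i ∈ s, x i * y i) ^ 2) := by
          rw [Real.sqrt_sq h5]
      _ ≤ Real.sqrt (A * B) := Real.sqrt_le_sqrt h4
  have h5 : ∑' i, x i * y i ≤ Real.sqrt (A * B) := Summable.tsum_le_of_sum_le hxy key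
  have h6 : 0 ≤ ∑' i, x i * y i := tsum_nonneg hnn
  calc (∑' i, x i * y i) ^ 2 ≤ Real.sqrt (A * B) ^ 2 := pow_le_pow_left₀ h6 h5 2
    _ = A * B := Real.sq_sqrt (mul_nonneg hAnn hBnn)

end JLaux

namespace JLaux

lemma part1 {L : ℝ} (hL : 0 < L) {ψc : Lat3 → ℂ}
    (hψ : ∀ n : ℕ, ∃ Cn : ℝ, ∀ k : Lat3, ‖ψc k‖ ≤ Cn * (1 + knorm L k ^ 2) ^ (-(n:ℝ))) :
    Summable (fun p : Lat3 × Lat3 =>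
      if p.2 = 0 then (0:ℝ)
      else 4 * (knorm L p.1 ^ 2 + 1)⁻¹ * (L ^ 3)⁻¹ * ‖ψc (p.1 - p.2)‖ ^ 2 /
        knorm L p.2 ^ 2) := by
  have hπ := Real.pi_pos
  obtain ⟨C1, hC1nn, hC1⟩ := decay hL hψ 1
  set w : Lat3 → ℝ := fun m => ((knorm L m ^ 2 + 1)^2)⁻¹ with hw
  have hwnn : ∀ m, 0 ≤ w m := fun m => by rw [hw]; positivity
  have hwsum : Summable w := summable_w hL
  -- ψc squared summable
  have hsq : ∀ j, ‖ψc j‖ ^ 2 ≤ C1 ^ 2 * w j := by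
    intro j
    have h := hC1 j
    calc ‖ψc j‖ ^ 2 ≤ (C1 * ((knorm L j ^ 2 + 1)^1)⁻¹) ^ 2 :=
          pow_le_pow_left₀ (norm_nonneg _) h 2
      _ = C1 ^ 2 * w j := by
          simp only [hw, mul_pow, pow_one, inv_pow]
  have hψ2 : Summable fun j : Lat3 => ‖ψc j‖ ^ 2 :=
    (hwsum.mul_left (C1 ^ 2)).of_nonneg_of_le (fun j => sq_nonneg _) hsq
  -- d constant
  set d : ℝ := 1 + (L / (2 * Real.pi))^2 with hd
  have hdpos : 0 < d := by positivity
  have hinv2 : ∀ k : Lat3, k ≠ 0 → ((knorm L k ^ 2)⁻¹)^2 ≤ d ^ 2 * w k := by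
    intro k hk
    have hkpos := knorm_pos hL hk
    have hklow := knorm_lower hL hk
    have key : (knorm L k ^ 2)⁻¹ ≤ d * (knorm L k ^ 2 + 1)⁻¹ := by
      rw [inv_eq_one_div, inv_eq_one_div, mul_one_div, div_le_div_iff₀ (by positivity) (by positivity)]
      have e1 : (L / (2 * Real.pi))^2 * (2 * Real.pi / L)^2 = 1 := by
        rw [← mul_pow, show L / (2 * Real.pi) * (2 * Real.pi / L) = 1 from by
          field_simp]
        norm_num
      have e2 : (2 * Real.pi / L)^2 ≤ knorm L k ^ 2 :=
        pow_le_pow_left₀ (by positivity) hklow 2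
      have e3 : (L / (2 * Real.pi))^2 * (2 * Real.pi / L)^2 ≤ (L / (2 * Real.pi))^2 * knorm L k ^ 2 :=
        mul_le_mul_of_nonneg_left e2 (by positivity)
      rw [e1] at e3
      rw [hd]
      nlinarith
    calc ((knorm L k ^ 2)⁻¹)^2 ≤ (d * (knorm L k ^ 2 + 1)⁻¹)^2 :=
          pow_le_pow_left₀ (by positivity) key 2
      _ = d ^ 2 * w k := by simp only [hw, mul_pow, inv_pow]
  -- bound function
  set B : Lat3 × Lat3 → ℝ := fun p =>
    2 * (L ^ 3)⁻¹ * (‖ψc (p.1 - p.2)‖ ^ 2 * w p.1)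
      + 2 * (L ^ 3)⁻¹ * d ^ 2 * (‖ψc (p.1 - p.2)‖ ^ 2 * w p.2) with hB
  have hBsum : Summable B := by
    have hF : Summable (fun q : Lat3 × Lat3 => ‖ψc q.1‖ ^ 2 * w q.2) :=
      hψ2.mul_of_nonneg hwsum (fun j => sq_nonneg _) hwnn
    have hp1 : Summable (fun p : Lat3 × Lat3 => ‖ψc (p.1 - p.2)‖ ^ 2 * w p.1) :=
      (shear1.summable_iff (f := fun q : Lat3 × Lat3 => ‖ψc q.1‖ ^ 2 * w q.2)).mpr hF
    have hp2 : Summable (fun p : Lat3 × Lat3 => ‖ψc (p.1 - p.2)‖ ^ 2 * w p.2) :=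
      (shear2.summable_iff (f := fun q : Lat3 × Lat3 => ‖ψc q.1‖ ^ 2 * w q.2)).mpr hF
    exact ((hp1.mul_left _).add ((hp2.mul_left _)))
  refine Summable.of_nonneg_of_le ?_ ?_ hBsum
  · intro p
    by_cases hp : p.2 = 0
    · rw [if_pos hp]
    · rw [if_neg hp]
      have := knorm_pos hL hp
      positivity
  · intro p
    by_cases hp : p.2 = 0
    · rw [if_pos hp, hB]
      have := hwnn p.1
      have := hwnn p.2
      positivity
    · rw [if_neg hp]
      have hkpos := knorm_pos hL hp
      set A1 : ℝ := (knorm L p.1 ^ 2 + 1)⁻¹ with hA1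
      set A2 : ℝ := (knorm L p.2 ^ 2)⁻¹ with hA2
      have hA1nn : 0 ≤ A1 := by positivity
      have hA2nn : 0 ≤ A2 := by positivity
      have hprod : A1 * A2 ≤ (A1 ^ 2 + A2 ^ 2) / 2 := by nlinarith [sq_nonneg (A1 - A2)]
      have hA1sq : A1 ^ 2 = w p.1 := by simp only [hA1, hw, inv_pow]
      have hA2sq : A2 ^ 2 ≤ d ^ 2 * w p.2 := hinv2 p.2 hp
      have heq : 4 * A1 * (L ^ 3)⁻¹ * ‖ψc (p.1 - p.2)‖ ^ 2 / knorm L p.2 ^ 2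
          = (4 * (L ^ 3)⁻¹ * ‖ψc (p.1 - p.2)‖ ^ 2) * (A1 * A2) := by
        rw [hA2, div_eq_mul_inv]; ring
      have hc0 : (0:ℝ) ≤ 4 * (L ^ 3)⁻¹ * ‖ψc (p.1 - p.2)‖ ^ 2 := by positivity
      calc 4 * (knorm L p.1 ^ 2 + 1)⁻¹ * (L ^ 3)⁻¹ * ‖ψc (p.1 - p.2)‖ ^ 2 / knorm L p.2 ^ 2
          = (4 * (L ^ 3)⁻¹ * ‖ψc (p.1 - p.2)‖ ^ 2) * (A1 * A2) := heq
        _ ≤ (4 * (L ^ 3)⁻¹ * ‖ψc (p.1 - p.2)‖ ^ 2) * ((A1 ^ 2 + A2 ^ 2) / 2) :=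
            mul_le_mul_of_nonneg_left hprod hc0
        _ ≤ B p := by
            have hz : (0:ℝ) ≤ 2 * (L ^ 3)⁻¹ * ‖ψc (p.1 - p.2)‖ ^ 2 := by positivity
            have e0 : (4 * (L ^ 3)⁻¹ * ‖ψc (p.1 - p.2)‖ ^ 2) * ((A1 ^ 2 + A2 ^ 2) / 2)
                = 2 * (L ^ 3)⁻¹ * (‖ψc (p.1 - p.2)‖ ^ 2 * A1 ^ 2)
                  + (2 * (L ^ 3)⁻¹ * ‖ψc (p.1 - p.2)‖ ^ 2) * A2 ^ 2 := by ring
            have e1 : 2 * (L ^ 3)⁻¹ * (‖ψc (p.1 - p.2)‖ ^ 2 * A1 ^ 2)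
                = 2 * (L ^ 3)⁻¹ * (‖ψc (p.1 - p.2)‖ ^ 2 * w p.1) := by rw [hA1sq]
            have e2 : (2 * (L ^ 3)⁻¹ * ‖ψc (p.1 - p.2)‖ ^ 2) * A2 ^ 2
                ≤ (2 * (L ^ 3)⁻¹ * ‖ψc (p.1 - p.2)‖ ^ 2) * (d ^ 2 * w p.2) :=
              mul_le_mul_of_nonneg_left hA2sq hz
            have e3 : (2 * (L ^ 3)⁻¹ * ‖ψc (p.1 - p.2)‖ ^ 2) * (d ^ 2 * w p.2)
                = 2 * (L ^ 3)⁻¹ * d ^ 2 * (‖ψc (p.1 - p.2)‖ ^ 2 * w p.2) := by ring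
            rw [e0, e1]
            rw [e3] at e2
            have hBp : B p = 2 * (L ^ 3)⁻¹ * (‖ψc (p.1 - p.2)‖ ^ 2 * w p.1)
                + 2 * (L ^ 3)⁻¹ * d ^ 2 * (‖ψc (p.1 - p.2)‖ ^ 2 * w p.2) := rfl
            rw [hBp]
            linarith [e2]

end JLaux

namespace JLaux

noncomputable def Dfun (h gg : Lat3 → ℝ) (m k : Lat3) : ℝ :=
  if k = 0 then 0 else h (m - k) * gg k

noncomputable def Ufun (h gg : Lat3 → ℝ) (p : Lat3 × Lat3) : ℝ :=
  if p.2 = 0 then 0 else h (p.1 - p.2) * gg p.2 ^ 2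

lemma young_l2 (h gg : Lat3 → ℝ) (hhnn : ∀ j, 0 ≤ h j) (hggnn : ∀ k, 0 ≤ gg k)
    (hhsum : Summable h) (hgg2 : Summable fun k => gg k ^ 2) :
    (∀ m : Lat3, Summable (Dfun h gg m)) ∧
    Summable (fun m : Lat3 => (∑' k, Dfun h gg m k) ^ 2) ∧
    ∑' m : Lat3, (∑' k, Dfun h gg m k) ^ 2
      ≤ (∑' j, h j) ^ 2 * ∑' k, gg k ^ 2 := by
  set H : ℝ := ∑' j, h j with hH
  have hHnn : 0 ≤ H := tsum_nonneg hhnn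
  set M : ℝ := Real.sqrt (∑' k, gg k ^ 2) with hM
  have hMnn : 0 ≤ M := Real.sqrt_nonneg _
  have hgM : ∀ k, gg k ≤ M := by
    intro k
    have h1 : gg k ^ 2 ≤ ∑' j, gg j ^ 2 := Summable.le_tsum hgg2 k (fun j _ => sq_nonneg _)
    calc gg k = Real.sqrt (gg k ^ 2) := (Real.sqrt_sq (hggnn k)).symm
      _ ≤ M := Real.sqrt_le_sqrt h1
  have hHm : ∀ m : Lat3, Summable (fun k => h (m - k)) := fun m =>
    ((Equiv.subLeft m).summable_iff (f := h)).mpr hhsum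
  have hHmtsum : ∀ m : Lat3, ∑' k, h (m - k) = H := fun m => (Equiv.subLeft m).tsum_eq h
  have hDnn : ∀ m k, 0 ≤ Dfun h gg m k := by
    intro m k
    rw [Dfun]
    by_cases hk : k = 0
    · rw [if_pos hk]
    · rw [if_neg hk]; exact mul_nonneg (hhnn _) (hggnn _)
  have hDsum : ∀ m, Summable (Dfun h gg m) := by
    intro m
    refine ((hHm m).mul_right M).of_nonneg_of_le (hDnn m) ?_
    intro k
    rw [Dfun]
    by_cases hk : k = 0
    · rw [if_pos hk]; exact mul_nonneg (hhnn _) hMnn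
    · rw [if_neg hk]; exact mul_le_mul_of_nonneg_left (hgM k) (hhnn _)
  have hUnn : ∀ p, 0 ≤ Ufun h gg p := by
    intro p
    rw [Ufun]
    by_cases hp : p.2 = 0
    · rw [if_pos hp]
    · rw [if_neg hp]; exact mul_nonneg (hhnn _) (sq_nonneg _)
  have hV0 : Summable (fun q : Lat3 × Lat3 => h q.1 * gg q.2 ^ 2) :=
    hhsum.mul_of_nonneg hgg2 hhnn (fun k => sq_nonneg _)
  have hV : Summable (fun p : Lat3 × Lat3 => h (p.1 - p.2) * gg p.2 ^ 2) :=
    (shear2.summable_iff (f := fun q : Lat3 × Lat3 => h q.1 * gg q.2 ^ 2)).mpr hV0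
  have hU : Summable (Ufun h gg) := by
    refine hV.of_nonneg_of_le hUnn ?_
    intro p
    rw [Ufun]
    by_cases hp : p.2 = 0
    · rw [if_pos hp]; exact mul_nonneg (hhnn _) (sq_nonneg _)
    · rw [if_neg hp]
  have hEsum : ∀ m, Summable (fun k => Ufun h gg (m, k)) := fun m => hU.prod_factor m
  -- Cauchy-Schwarz per m
  have hCS : ∀ m, (∑' k, Dfun h gg m k) ^ 2 ≤ H * ∑' k, Ufun h gg (m, k) := by
    intro m
    have hx : Summable (fun k => (Real.sqrt (h (m - k))) ^ 2) := by
      refine (hHm m).congr fun k => ?_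
      rw [Real.sq_sqrt (hhnn _)]
    have hy : Summable (fun k =>
        (if k = 0 then 0 else Real.sqrt (h (m - k)) * gg k) ^ 2) := by
      refine (hEsum m).congr fun k => ?_
      by_cases hk : k = 0
      · rw [Ufun, if_pos hk, if_pos hk]
        norm_num
      · rw [Ufun, if_neg hk, if_neg hk, mul_pow, Real.sq_sqrt (hhnn _)]
    have hxy : Summable (fun k =>
        Real.sqrt (h (m - k)) * (if k = 0 then 0 else Real.sqrt (h (m - k)) * gg k)) := by
      refine (hDsum m).congr fun k => ?_
      by_cases hk : k = 0
      · rw [Dfun, if_pos hk, if_pos hk, mul_zero]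
      · rw [Dfun, if_neg hk, if_neg hk, ← mul_assoc, Real.mul_self_sqrt (hhnn _)]
    have hnn : ∀ k, 0 ≤ Real.sqrt (h (m - k)) *
        (if k = 0 then 0 else Real.sqrt (h (m - k)) * gg k) := by
      intro k
      by_cases hk : k = 0
      · rw [if_pos hk, mul_zero]
      · rw [if_neg hk]
        exact mul_nonneg (Real.sqrt_nonneg _)
          (mul_nonneg (Real.sqrt_nonneg _) (hggnn _))
    have := tsum_cs (fun k => Real.sqrt (h (m - k)))
      (fun k => if k = 0 then 0 else Real.sqrt (h (m - k)) * gg k) hx hy hxy hnn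
    have e1 : (∑' k, Real.sqrt (h (m - k)) *
        (if k = 0 then 0 else Real.sqrt (h (m - k)) * gg k)) = ∑' k, Dfun h gg m k := by
      refine tsum_congr fun k => ?_
      by_cases hk : k = 0
      · rw [Dfun, if_pos hk, if_pos hk, mul_zero]
      · rw [Dfun, if_neg hk, if_neg hk, ← mul_assoc, Real.mul_self_sqrt (hhnn _)]
    have e2 : (∑' k, (Real.sqrt (h (m - k))) ^ 2) = H := by
      rw [← hHmtsum m]
      exact tsum_congr fun k => Real.sq_sqrt (hhnn _)
    have e3 : (∑' k, (if k = 0 then 0 else Real.sqrt (h (m - k)) * gg k) ^ 2)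
        = ∑' k, Ufun h gg (m, k) := by
      refine tsum_congr fun k => ?_
      by_cases hk : k = 0
      · rw [Ufun, if_pos hk, if_pos hk]
        norm_num
      · rw [Ufun, if_neg hk, if_neg hk, mul_pow, Real.sq_sqrt (hhnn _)]
    rw [e1, e2, e3] at this
    exact this
  have hFsum : Summable (fun m => H * ∑' k, Ufun h gg (m, k)) :=
    (hU.prod.mul_left H)
  have hSQsum : Summable (fun m : Lat3 => (∑' k, Dfun h gg m k) ^ 2) :=
    hFsum.of_nonneg_of_le (fun m => sq_nonneg _) hCS
  refine ⟨hDsum, hSQsum, ?_⟩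
  have step1 : ∑' m, (∑' k, Dfun h gg m k) ^ 2 ≤ ∑' m, H * ∑' k, Ufun h gg (m, k) :=
    Summable.tsum_le_tsum hCS hSQsum hFsum
  have step2 : ∑' m, H * ∑' k, Ufun h gg (m, k) = H * ∑' p : Lat3 × Lat3, Ufun h gg p := by
    rw [tsum_mul_left, Summable.tsum_prod hU]
  have step3 : ∑' p : Lat3 × Lat3, Ufun h gg p ≤ ∑' p : Lat3 × Lat3, h (p.1 - p.2) * gg p.2 ^ 2 := by
    refine Summable.tsum_le_tsum ?_ hU hV
    intro p
    rw [Ufun]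
    by_cases hp : p.2 = 0
    · rw [if_pos hp]; exact mul_nonneg (hhnn _) (sq_nonneg _)
    · rw [if_neg hp]
  have step4 : ∑' p : Lat3 × Lat3, h (p.1 - p.2) * gg p.2 ^ 2 = H * ∑' k, gg k ^ 2 := by
    have e4 : ∑' p : Lat3 × Lat3, h (p.1 - p.2) * gg p.2 ^ 2
        = ∑' q : Lat3 × Lat3, h q.1 * gg q.2 ^ 2 :=
      shear2.tsum_eq (fun q : Lat3 × Lat3 => h q.1 * gg q.2 ^ 2)
    rw [e4, Summable.tsum_prod hV0]
    calc ∑' a, ∑' b, h a * gg b ^ 2 = ∑' a, h a * ∑' b, gg b ^ 2 := by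
          exact tsum_congr fun a => tsum_mul_left
      _ = H * ∑' b, gg b ^ 2 := by rw [tsum_mul_right]
  calc ∑' m, (∑' k, Dfun h gg m k) ^ 2 ≤ ∑' m, H * ∑' k, Ufun h gg (m, k) := step1
    _ = H * ∑' p : Lat3 × Lat3, Ufun h gg p := step2
    _ ≤ H * (∑' p : Lat3 × Lat3, h (p.1 - p.2) * gg p.2 ^ 2) :=
        mul_le_mul_of_nonneg_left step3 hHnn
    _ = H * (H * ∑' k, gg k ^ 2) := by rw [step4]
    _ = H ^ 2 * ∑' k, gg k ^ 2 := by ring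

end JLaux

namespace JLaux

lemma part2 {L : ℝ} (hL : 0 < L) {ψc : Lat3 → ℂ}
    (hψ : ∀ n : ℕ, ∃ Cn : ℝ, ∀ k : Lat3, ‖ψc k‖ ≤ Cn * (1 + knorm L k ^ 2) ^ (-(n:ℝ))) :
    ∃ CL : ℝ, 0 < CL ∧
      ∀ f : Lat3 → ℂ,
        Summable (fun k : Lat3 => ‖f k‖ ^ 2) →
        (∀ m : Lat3, Summable (fun k : Lat3 =>
          if k = 0 then (0:ℂ) else ψc (m - k) * f k * (((knorm L k)⁻¹ : ℝ) : ℂ))) →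
        (∑' m : Lat3, ‖Aop L ψc f m‖ ^ 2) ≤
          CL * ∑' k : Lat3, ‖f k‖ ^ 2 / (knorm L k ^ 2 + 1) ^ 2 := by
  have hπ := Real.pi_pos
  obtain ⟨C3, hC3nn, hC3⟩ := decay hL hψ 3
  set lam : ℝ := L ^ (-(3:ℝ)/2) with hlam
  have hlampos : 0 < lam := Real.rpow_pos_of_pos hL _
  set hfun : Lat3 → ℝ := fun j => ‖ψc j‖ * (1 + L / (2*Real.pi) + knorm L j) with hhdef
  have hhnn : ∀ j, 0 ≤ hfun j := by
    intro j
    have hk := knorm_nonneg hL j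
    apply mul_nonneg (norm_nonneg _)
    positivity
  have hhsum : Summable hfun := by
    refine ((summable_w hL).mul_left (C3 * (2 + L / (2*Real.pi)))).of_nonneg_of_le hhnn ?_
    intro j
    have hk := knorm_nonneg hL j
    have hx : (0:ℝ) < knorm L j ^ 2 + 1 := by positivity
    have hd0 : (0:ℝ) ≤ L / (2*Real.pi) := by positivity
    have ht : 1 + L / (2*Real.pi) + knorm L j ≤ (2 + L / (2*Real.pi)) * (knorm L j ^ 2 + 1) := by
      nlinarith [sq_nonneg (knorm L j - 1), mul_nonneg hd0 (sq_nonneg (knorm L j))]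
    have hψj := hC3 j
    calc hfun j ≤ (C3 * ((knorm L j ^ 2 + 1)^3)⁻¹) * ((2 + L / (2*Real.pi)) * (knorm L j ^ 2 + 1)) := by
          apply mul_le_mul hψj ht (by positivity) (by positivity)
      _ = C3 * (2 + L / (2*Real.pi)) * ((knorm L j ^ 2 + 1)^2)⁻¹ := by
          field_simp
  set H : ℝ := ∑' j, hfun j with hH
  have hHnn : 0 ≤ H := tsum_nonneg hhnn
  -- beta facts
  have hbeq : ∀ m : Lat3, (knorm L m ^ 2 + 1) ^ (-(1:ℝ)/2)
      = (Real.sqrt (knorm L m ^ 2 + 1))⁻¹ := by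
    intro m
    rw [show (-(1:ℝ)/2) = -(1/2:ℝ) by norm_num, Real.rpow_neg (by positivity),
      Real.sqrt_eq_rpow]
  have hbpos : ∀ m : Lat3, 0 < (knorm L m ^ 2 + 1) ^ (-(1:ℝ)/2) := fun m =>
    Real.rpow_pos_of_pos (by positivity) _
  have hble : ∀ m : Lat3, (knorm L m ^ 2 + 1) ^ (-(1:ℝ)/2) ≤ 1 := by
    intro m
    rw [hbeq m]
    apply inv_le_one_of_one_le₀
    rw [show (1:ℝ) = Real.sqrt 1 from (Real.sqrt_one).symm]
    apply Real.sqrt_le_sqrt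
    nlinarith [sq_nonneg (knorm L m), Real.sqrt_one]
  have hbk : ∀ m : Lat3, (knorm L m ^ 2 + 1) ^ (-(1:ℝ)/2) * knorm L m ≤ 1 := by
    intro m
    rw [hbeq m]
    have hsp : 0 < Real.sqrt (knorm L m ^ 2 + 1) := Real.sqrt_pos.mpr (by positivity)
    have h1 : knorm L m ≤ Real.sqrt (knorm L m ^ 2 + 1) := by
      calc knorm L m = Real.sqrt (knorm L m ^ 2) := (Real.sqrt_sq (knorm_nonneg hL m)).symm
        _ ≤ Real.sqrt (knorm L m ^ 2 + 1) := Real.sqrt_le_sqrt (by linarith)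
    calc (Real.sqrt (knorm L m ^ 2 + 1))⁻¹ * knorm L m
        ≤ (Real.sqrt (knorm L m ^ 2 + 1))⁻¹ * Real.sqrt (knorm L m ^ 2 + 1) :=
          mul_le_mul_of_nonneg_left h1 (inv_nonneg.mpr hsp.le)
      _ = 1 := inv_mul_cancel₀ hsp.ne'
  refine ⟨4 * lam ^ 2 * H ^ 2 + 1, by positivity, ?_⟩
  intro f hf2 hconv
  set g : Lat3 → ℝ := fun k => ‖f k‖ * (knorm L k ^ 2 + 1)⁻¹ with hg
  have hgnn : ∀ k, 0 ≤ g k := by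
    intro k
    have := knorm_nonneg hL k
    apply mul_nonneg (norm_nonneg _)
    positivity
  have hgle : ∀ k, g k ≤ ‖f k‖ := by
    intro k
    have h1 : (knorm L k ^ 2 + 1)⁻¹ ≤ 1 := by
      apply inv_le_one_of_one_le₀
      nlinarith [sq_nonneg (knorm L k)]
    calc g k ≤ ‖f k‖ * 1 := mul_le_mul_of_nonneg_left h1 (norm_nonneg _)
      _ = ‖f k‖ := mul_one _
  have hg2sum : Summable (fun k => g k ^ 2) :=
    hf2.of_nonneg_of_le (fun k => sq_nonneg _)
      (fun k => pow_le_pow_left₀ (hgnn k) (hgle k) 2)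
  obtain ⟨hDsum, hSQsum, hYoung⟩ := young_l2 hfun g hhnn hgnn hhsum hg2sum
  -- pointwise bound
  have key : ∀ m k : Lat3, (knorm L m ^ 2 + 1) ^ (-(1:ℝ)/2) *
      ‖(if k = 0 then (0:ℂ) else ψc (m - k) * f k * (((knorm L k)⁻¹ : ℝ) : ℂ))‖
      ≤ Dfun hfun g m k := by
    intro m k
    by_cases hk : k = 0
    · rw [if_pos hk, Dfun, if_pos hk, norm_zero, mul_zero]
    · rw [if_neg hk, Dfun, if_neg hk]
      have hkpos := knorm_pos hL hk
      have hklow := knorm_lower hL hk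
      have hcc : ‖ψc (m - k) * f k * (((knorm L k)⁻¹ : ℝ) : ℂ)‖
          = ‖ψc (m - k)‖ * ‖f k‖ * (knorm L k)⁻¹ := by
        rw [norm_mul, norm_mul, Complex.norm_real, Real.norm_eq_abs,
          abs_of_nonneg (inv_nonneg.mpr (knorm_nonneg hL k))]
      rw [hcc]
      have core : (knorm L m ^ 2 + 1) ^ (-(1:ℝ)/2) * (knorm L k)⁻¹
          ≤ (1 + L / (2*Real.pi) + knorm L (m - k)) * (knorm L k ^ 2 + 1)⁻¹ := by
        rw [inv_eq_one_div, inv_eq_one_div, mul_one_div, mul_one_div,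
          div_le_div_iff₀ hkpos (by positivity)]
        have t1 : (knorm L m ^ 2 + 1) ^ (-(1:ℝ)/2) * knorm L k
            ≤ 1 + knorm L (m - k) := by
          have tri := knorm_triangle hL m k
          have h2 : (knorm L m ^ 2 + 1) ^ (-(1:ℝ)/2) * knorm L k
              ≤ (knorm L m ^ 2 + 1) ^ (-(1:ℝ)/2) * (knorm L m + knorm L (m - k)) :=
            mul_le_mul_of_nonneg_left tri (hbpos m).le
          have h3 : (knorm L m ^ 2 + 1) ^ (-(1:ℝ)/2) * knorm L (m - k) ≤ knorm L (m - k) :=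
            mul_le_of_le_one_left (knorm_nonneg hL _) (hble m)
          have h4 := hbk m
          nlinarith [h2, h3, h4]
        have t2 : (1:ℝ) ≤ (L / (2*Real.pi)) * knorm L k := by
          have e : (L / (2*Real.pi)) * (2*Real.pi/L) = 1 := by field_simp
          calc (1:ℝ) = (L / (2*Real.pi)) * (2*Real.pi/L) := e.symm
            _ ≤ (L / (2*Real.pi)) * knorm L k :=
              mul_le_mul_of_nonneg_left hklow (by positivity)
        have t1' := mul_le_mul_of_nonneg_right t1 (knorm_nonneg hL k)
        have t3 := hble m
        nlinarith [t1', t2, t3]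
      calc (knorm L m ^ 2 + 1) ^ (-(1:ℝ)/2) * (‖ψc (m - k)‖ * ‖f k‖ * (knorm L k)⁻¹)
          = (‖ψc (m - k)‖ * ‖f k‖) * ((knorm L m ^ 2 + 1) ^ (-(1:ℝ)/2) * (knorm L k)⁻¹) := by
            ring
        _ ≤ (‖ψc (m - k)‖ * ‖f k‖) *
            ((1 + L / (2*Real.pi) + knorm L (m - k)) * (knorm L k ^ 2 + 1)⁻¹) :=
            mul_le_mul_of_nonneg_left core
              (mul_nonneg (norm_nonneg _) (norm_nonneg _))
        _ = hfun (m - k) * g k := by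
            simp only [hhdef, hg]
            ring
  -- norm of Aop
  have bndA : ∀ m : Lat3, ‖Aop L ψc f m‖ ≤ 2 * lam * ∑' k, Dfun hfun g m k := by
    intro m
    have hAeq : Aop L ψc f m
        = (((2 * ((knorm L m ^ 2 + 1) ^ (-(1:ℝ)/2)) * lam : ℝ)) : ℂ) *
          ∑' k : Lat3, (if k = 0 then (0:ℂ) else ψc (m - k) * f k * (((knorm L k)⁻¹ : ℝ) : ℂ)) := by
      simp only [Aop, hlam]
      push_cast
      ring
    have hnorm : ‖Aop L ψc f m‖
        = (2 * ((knorm L m ^ 2 + 1) ^ (-(1:ℝ)/2)) * lam) *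
          ‖∑' k : Lat3, (if k = 0 then (0:ℂ) else ψc (m - k) * f k * (((knorm L k)⁻¹ : ℝ) : ℂ))‖ := by
      rw [hAeq, norm_mul, Complex.norm_real, Real.norm_eq_abs,
        abs_of_pos (by positivity : (0:ℝ) < 2 * ((knorm L m ^ 2 + 1) ^ (-(1:ℝ)/2)) * lam)]
    have hsn : Summable (fun k : Lat3 =>
        ‖(if k = 0 then (0:ℂ) else ψc (m - k) * f k * (((knorm L k)⁻¹ : ℝ) : ℂ))‖) :=
      (hconv m).norm
    have h5 : ‖∑' k : Lat3, (if k = 0 then (0:ℂ) else ψc (m - k) * f k * (((knorm L k)⁻¹ : ℝ) : ℂ))‖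
        ≤ ∑' k, ‖(if k = 0 then (0:ℂ) else ψc (m - k) * f k * (((knorm L k)⁻¹ : ℝ) : ℂ))‖ :=
      norm_tsum_le_tsum_norm hsn
    have h6 : ((knorm L m ^ 2 + 1) ^ (-(1:ℝ)/2)) *
        ∑' k, ‖(if k = 0 then (0:ℂ) else ψc (m - k) * f k * (((knorm L k)⁻¹ : ℝ) : ℂ))‖
        ≤ ∑' k, Dfun hfun g m k := by
      rw [← tsum_mul_left]
      exact Summable.tsum_le_tsum (key m) (hsn.mul_left _) (hDsum m)
    calc ‖Aop L ψc f m‖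
        = (2 * lam) * (((knorm L m ^ 2 + 1) ^ (-(1:ℝ)/2)) *
          ‖∑' k : Lat3, (if k = 0 then (0:ℂ) else ψc (m - k) * f k * (((knorm L k)⁻¹ : ℝ) : ℂ))‖) := by
          rw [hnorm]; ring
      _ ≤ (2 * lam) * (((knorm L m ^ 2 + 1) ^ (-(1:ℝ)/2)) *
          ∑' k, ‖(if k = 0 then (0:ℂ) else ψc (m - k) * f k * (((knorm L k)⁻¹ : ℝ) : ℂ))‖) := by
          apply mul_le_mul_of_nonneg_left _ (by positivity)
          exact mul_le_mul_of_nonneg_left h5 (hbpos m).le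
      _ ≤ (2 * lam) * ∑' k, Dfun hfun g m k := by
          apply mul_le_mul_of_nonneg_left h6 (by positivity)
  -- square and sum
  have bndsq : ∀ m : Lat3, ‖Aop L ψc f m‖ ^ 2
      ≤ 4 * lam ^ 2 * (∑' k, Dfun hfun g m k) ^ 2 := by
    intro m
    calc ‖Aop L ψc f m‖ ^ 2 ≤ (2 * lam * ∑' k, Dfun hfun g m k) ^ 2 :=
          pow_le_pow_left₀ (norm_nonneg _) (bndA m) 2
      _ = 4 * lam ^ 2 * (∑' k, Dfun hfun g m k) ^ 2 := by ring
  have hRHSsum : Summable (fun m : Lat3 => 4 * lam ^ 2 * (∑' k, Dfun hfun g m k) ^ 2) :=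
    hSQsum.mul_left _
  have hLHSsum : Summable (fun m : Lat3 => ‖Aop L ψc f m‖ ^ 2) :=
    hRHSsum.of_nonneg_of_le (fun m => sq_nonneg _) bndsq
  have main : (∑' m : Lat3, ‖Aop L ψc f m‖ ^ 2)
      ≤ (4 * lam ^ 2 * H ^ 2) * ∑' k, g k ^ 2 := by
    calc (∑' m : Lat3, ‖Aop L ψc f m‖ ^ 2)
        ≤ ∑' m : Lat3, 4 * lam ^ 2 * (∑' k, Dfun hfun g m k) ^ 2 :=
          Summable.tsum_le_tsum bndsq hLHSsum hRHSsum
      _ = 4 * lam ^ 2 * ∑' m : Lat3, (∑' k, Dfun hfun g m k) ^ 2 := tsum_mul_left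
      _ ≤ 4 * lam ^ 2 * (H ^ 2 * ∑' k, g k ^ 2) := by
          apply mul_le_mul_of_nonneg_left hYoung (by positivity)
      _ = (4 * lam ^ 2 * H ^ 2) * ∑' k, g k ^ 2 := by ring
  have hgid : (∑' k, g k ^ 2) = ∑' k : Lat3, ‖f k‖ ^ 2 / (knorm L k ^ 2 + 1) ^ 2 := by
    refine tsum_congr fun k => ?_
    simp only [hg]
    rw [mul_pow, div_eq_mul_inv, inv_pow]
  have hgnn2 : 0 ≤ ∑' k, g k ^ 2 := tsum_nonneg fun k => sq_nonneg _
  calc (∑' m : Lat3, ‖Aop L ψc f m‖ ^ 2)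
      ≤ (4 * lam ^ 2 * H ^ 2) * ∑' k, g k ^ 2 := main
    _ ≤ (4 * lam ^ 2 * H ^ 2 + 1) * ∑' k, g k ^ 2 := by nlinarith [hgnn2]
    _ = (4 * lam ^ 2 * H ^ 2 + 1) * ∑' k : Lat3, ‖f k‖ ^ 2 / (knorm L k ^ 2 + 1) ^ 2 := by
        rw [hgid]

end JLaux

/-- For smooth `ψ_L ∈ C^∞(𝕋³_L)` (rapidly decaying Fourier coefficients `ψc`), the operator
`J_L = 4(-Δ_L)^{-1/2} ψ_L (-Δ_L+1)^{-1} ψ_L (-Δ_L)^{-1/2}` is trace class (its trace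
`Σ_{m,k≠0} 4(|m|²+1)^{-1} L^{-3} |ψc(m−k)|² |k|^{-2}` is finite) and satisfies
`J_L ≤ C_L (-Δ_L+1)^{-2}` in the sense of quadratic forms. -/
theorem JL_trace_class_and_bound :
    ∀ L : ℝ, 0 < L → ∀ ψc : Lat3 → ℂ,
      (∀ n : ℕ, ∃ Cn : ℝ, ∀ k : Lat3, ‖ψc k‖ ≤ Cn * (1 + knorm L k ^ 2) ^ (-(n:ℝ))) →
      (Summable (fun p : Lat3 × Lat3 =>
        if p.2 = 0 then (0:ℝ)
        else 4 * (knorm L p.1 ^ 2 + 1)⁻¹ * (L ^ 3)⁻¹ * ‖ψc (p.1 - p.2)‖ ^ 2 /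
          knorm L p.2 ^ 2)) ∧
      ∃ CL : ℝ, 0 < CL ∧
        ∀ f : Lat3 → ℂ,
          Summable (fun k : Lat3 => ‖f k‖ ^ 2) →
          (∀ m : Lat3, Summable (fun k : Lat3 =>
            if k = 0 then (0:ℂ) else ψc (m - k) * f k * (((knorm L k)⁻¹ : ℝ) : ℂ))) →
          (∑' m : Lat3, ‖Aop L ψc f m‖ ^ 2) ≤
            CL * ∑' k : Lat3, ‖f k‖ ^ 2 / (knorm L k ^ 2 + 1) ^ 2 := by
  intro L hL ψc hψ
  exact ⟨JLaux.part1 hL hψ, JLaux.part2 hL hψ⟩
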